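/- arXiv:2306.05008 — 5 statements merged into one kernel-verified Lean document; each statement's English description precedes it below -/
import Mathlib

section
/- Let m ≥ 1 be a natural number and for j ∈ ℕ define c_j = (1/π) ∫₀^{2π} (cos η)^m cos(jη) dη. Then ∑_{j=1}^m j c_j² = (m / 4^{m-1}) · C(m-1, ⌊(m-1)/2⌋)², where C denotes the binomial coefficient. -/
open Real intervalIntegral

lemma myIntegrable (m j : ℕ) (a b : ℝ) :
    IntervalIntegrable (fun η => (Real.cos η) ^ m * Real.cos (j * η)) MeasureTheory.volume a b :=
  (Continuous.mul (by continuity) (by continuity)).intervalIntegrable a b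

lemma int_cos_nat (j : ℕ) (hj : 1 ≤ j) :
    (∫ η in (0:ℝ)..(2 * π), Real.cos (j * η)) = 0 := by
  have hj' : (j : ℝ) ≠ 0 := by positivity
  have := integral_comp_mul_left (a := (0:ℝ)) (b := 2*π) (fun x => Real.cos x) hj'
  rw [this]
  have : (j:ℝ) * (2*π) = (2*j : ℕ) * π := by push_cast; ring
  simp only [integral_cos, this, Real.sin_nat_mul_pi, mul_zero, Real.sin_zero,
    sub_zero, smul_zero]

noncomputable def V (m j : ℕ) : ℝ :=
  if j ≤ m ∧ m % 2 = j % 2 then (2 * π) / 2 ^ m * (Nat.choose m ((m - j) / 2)) else 0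

lemma V_zero_one (m : ℕ) : V (m + 1) 0 = V m 1 := by
  unfold V
  rcases Nat.even_or_odd m with he | ho
  · obtain ⟨t, rfl⟩ := he
    rw [if_neg (by omega), if_neg (by omega)]
  · obtain ⟨t, rfl⟩ := ho
    rw [if_pos (by omega), if_pos (by omega)]
    rw [show (2 * t + 1 + 1 - 0) / 2 = t + 1 from by omega,
        show (2 * t + 1 - 1) / 2 = t from by omega]
    have h4 : (2 * t + 1).choose (t + 1) = (2 * t + 1).choose t := by
      have := Nat.choose_symm (show t ≤ 2 * t + 1 by omega)
      rwa [show 2 * t + 1 - t = t + 1 from by omega] at this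
    have hp := Nat.choose_succ_succ (2 * t + 1) t
    simp only [Nat.succ_eq_add_one] at hp h4
    have key : (2 * t + 1 + 1).choose (t + 1) = 2 * (2 * t + 1).choose t := by omega
    rw [key]
    push_cast
    ring

lemma V_rec (m j : ℕ) : V (m + 1) (j + 1) = (V m (j + 2) + V m j) / 2 := by
  unfold V
  by_cases hC : j ≤ m ∧ m % 2 = j % 2
  · rw [if_pos (by omega)]
    by_cases hB : j + 2 ≤ m
    · rw [if_pos (by omega), if_pos hC]
      have hd : 1 ≤ (m - j) / 2 := by omega
      obtain ⟨d, hd2⟩ : ∃ d, (m - j) / 2 = d + 1 := ⟨(m - j) / 2 - 1, by omega⟩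
      have h1 : (m + 1 - (j + 1)) / 2 = d + 1 := by omega
      have h2 : (m - (j + 2)) / 2 = d := by omega
      rw [h1, h2, hd2, Nat.choose_succ_succ]
      push_cast
      ring
    · -- j = m
      have hjm : j = m := by omega
      subst hjm
      rw [if_neg (by omega), if_pos (by omega)]
      have h1 : (j + 1 - (j + 1)) / 2 = 0 := by omega
      have h2 : (j - j) / 2 = 0 := by omega
      rw [h1, h2, Nat.choose_zero_right, Nat.choose_zero_right]
      push_cast
      ring
  · rw [if_neg (by omega), if_neg (by omega), if_neg (by omega)]
    norm_num

lemma integral_eq_V (m : ℕ) : ∀ j : ℕ,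
    (∫ η in (0:ℝ)..(2 * π), (Real.cos η) ^ m * Real.cos (j * η)) = V m j := by
  induction m with
  | zero =>
    intro j
    rcases Nat.eq_zero_or_pos j with rfl | hj
    · simp [V, two_mul, Real.pi_pos.le]
    · rw [V, if_neg (by omega)]
      simpa using int_cos_nat j hj
  | succ m ih =>
    intro j
    rcases Nat.eq_zero_or_pos j with rfl | hj
    · have : ∀ η : ℝ, (Real.cos η) ^ (m + 1) * Real.cos ((0:ℕ) * η)
          = (Real.cos η) ^ m * Real.cos ((1:ℕ) * η) := by
        intro η; push_cast; rw [zero_mul, one_mul, Real.cos_zero]; ring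
      rw [intervalIntegral.integral_congr (fun η _ => this η), ih 1, V_zero_one]
    · obtain ⟨j, rfl⟩ : ∃ j', j = j' + 1 := ⟨j - 1, by omega⟩
      have key : ∀ η : ℝ, (Real.cos η) ^ (m + 1) * Real.cos ((j + 1 : ℕ) * η)
          = ((Real.cos η) ^ m * Real.cos ((j + 2 : ℕ) * η)
             + (Real.cos η) ^ m * Real.cos ((j : ℕ) * η)) / 2 := by
        intro η
        have h1 : Real.cos ((j + 2 : ℕ) * η) + Real.cos ((j : ℕ) * η)
            = 2 * Real.cos ((j + 1 : ℕ) * η) * Real.cos η := by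
          rw [Real.cos_add_cos]
          push_cast
          ring_nf
        push_cast at h1 ⊢
        linear_combination (-(Real.cos η ^ m) / 2) * h1
      rw [intervalIntegral.integral_congr (fun η _ => key η)]
      rw [intervalIntegral.integral_div,
        intervalIntegral.integral_add (myIntegrable m (j+2) _ _) (myIntegrable m j _ _),
        ih (j+2), ih j, V_rec]

/-- For `m ≥ 1` and `c j = (1/π) ∫₀^{2π} (cos η)^m cos (j η) dη`, one has
`∑_{j=1}^m j c_j² = (m / 4^{m-1}) · C(m-1, ⌊(m-1)/2⌋)²`. -/
theorem sum_j_cj_sq (m : ℕ) (hm : 1 ≤ m) (c : ℕ → ℝ)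
    (hc : ∀ j : ℕ, c j =
      (1 / π) * ∫ η in (0:ℝ)..(2 * π), (Real.cos η) ^ m * Real.cos (j * η)) :
    ∑ j ∈ Finset.Icc 1 m, (j : ℝ) * (c j) ^ 2
      = ((m : ℝ) / 4 ^ (m - 1)) * ((Nat.choose (m - 1) ((m - 1) / 2) : ℝ)) ^ 2 := by
  have hπ : (π : ℝ) ≠ 0 := Real.pi_ne_zero
  have hcv : ∀ j, c j = (1 / π) * V m j := fun j => by rw [hc j, integral_eq_V]
  have hczero : ∀ j, ¬(j ≤ m ∧ m % 2 = j % 2) → c j = 0 := by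
    intro j h; rw [hcv, V, if_neg h]; ring
  have hcval : ∀ j, j ≤ m → m % 2 = j % 2 →
      c j = 2 / 2 ^ m * (Nat.choose m ((m - j) / 2) : ℝ) := by
    intro j h1 h2; rw [hcv, V, if_pos ⟨h1, h2⟩]; field_simp
  set K := (m - 1) / 2 with hK
  set e : ℕ → ℕ := fun k => m - 2 * k with he
  have hsub : (Finset.range (K + 1)).image e ⊆ Finset.Icc 1 m := by
    intro j hj
    simp only [Finset.mem_image, Finset.mem_range] at hj
    obtain ⟨k, hk, rfl⟩ := hj
    simp only [he, Finset.mem_Icc]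
    omega
  have step1 : ∑ j ∈ Finset.Icc 1 m, (j : ℝ) * (c j) ^ 2
      = ∑ j ∈ (Finset.range (K + 1)).image e, (j : ℝ) * (c j) ^ 2 := by
    refine (Finset.sum_subset hsub ?_).symm
    intro j hj hj'
    rw [Finset.mem_Icc] at hj
    have : ¬(j ≤ m ∧ m % 2 = j % 2) := by
      intro ⟨h1, h2⟩
      apply hj'
      simp only [Finset.mem_image, Finset.mem_range]
      exact ⟨(m - j) / 2, by omega, by simp only [he]; omega⟩
    rw [hczero j this]
    ring
  have step2 : ∑ j ∈ (Finset.range (K + 1)).image e, (j : ℝ) * (c j) ^ 2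
      = ∑ k ∈ Finset.range (K + 1), ((e k : ℕ) : ℝ) * (c (e k)) ^ 2 := by
    refine Finset.sum_image ?_
    intro x hx y hy hxy
    simp only [Finset.coe_range, Set.mem_Iio, Finset.mem_coe, Finset.mem_range] at hx hy
    simp only [he] at hxy
    omega
  rw [step1, step2]
  -- h function for telescoping
  set h : ℕ → ℝ := fun k => if k = 0 then 0 else (m : ℝ) * (Nat.choose (m - 1) (k - 1) : ℝ) ^ 2
    with hh
  have hterm : ∀ k ∈ Finset.range (K + 1),
      ((e k : ℕ) : ℝ) * (c (e k)) ^ 2 = (4 / 4 ^ m) * (h (k + 1) - h k) := by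
    intro k hk
    simp only [Finset.mem_range] at hk
    have h2k : 2 * k ≤ m - 1 := by omega
    have hle : e k ≤ m := by simp only [he]; omega
    have hpar : m % 2 = (e k) % 2 := by simp only [he]; omega
    have hidx : (m - e k) / 2 = k := by simp only [he]; omega
    rw [hcval _ hle hpar, hidx]
    have hek : e k + 2 * k = m := by simp only [he]; omega
    have hcast : ((e k : ℕ) : ℝ) = (m : ℝ) - 2 * k := by
      rw [← hek]; push_cast; ring
    rw [hcast]
    have h4 : (4:ℝ) ^ m = (2 ^ m) ^ 2 := by
      rw [show (4:ℝ) = 2 ^ 2 from by norm_num, ← pow_mul, ← pow_mul, mul_comm]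
    have h24 : ((2:ℝ) / 2 ^ m) ^ 2 = 4 / 4 ^ m := by
      rw [div_pow, h4]; norm_num
    rcases k with _ | k'
    · simp only [hh, Nat.choose_zero_right]
      norm_num
      rw [h24]
      ring
    · set k := k' + 1 with hk'
      have hkm : k ≤ m := by omega
      have hm1 : m - 1 + 1 = m := by omega
      have hA : m * Nat.choose (m - 1) k = Nat.choose m k * (m - k) := by
        have ha1 := Nat.add_one_mul_choose_eq (m - 1) k
        have ha2 := Nat.choose_succ_right_eq m k
        simp only [Nat.succ_eq_add_one, hm1] at ha1
        rw [ha1, ha2]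
      have hB : m * Nat.choose (m - 1) k' = Nat.choose m k * k := by
        have hb1 := Nat.add_one_mul_choose_eq (m - 1) k'
        simp only [Nat.succ_eq_add_one, hm1] at hb1
        rw [hb1, hk']
      have hA' : (m:ℝ) * (Nat.choose (m - 1) k : ℝ)
          = (Nat.choose m k : ℝ) * ((m:ℝ) - k) := by
        have := congrArg (fun x : ℕ => (x : ℝ)) hA
        push_cast [Nat.cast_sub hkm] at this
        simp only [hk']
        push_cast
        simp only [hk'] at this; push_cast at this
        linarith
      have hB' : (m:ℝ) * (Nat.choose (m - 1) k' : ℝ) = (Nat.choose m k : ℝ) * k := by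
        have := congrArg (fun x : ℕ => (x : ℝ)) hB
        push_cast at this
        simp only [hk']
        push_cast
        simp only [hk'] at this; push_cast at this
        linarith
      have hm0 : (m:ℝ) ≠ 0 := Nat.cast_ne_zero.mpr (by omega)
      have hcore : ((m:ℝ) - 2 * (k:ℝ)) * (Nat.choose m k : ℝ) ^ 2
          = (m:ℝ) * ((Nat.choose (m - 1) k : ℝ) ^ 2 - (Nat.choose (m - 1) k' : ℝ) ^ 2) := by
        refine mul_left_cancel₀ (pow_ne_zero 2 hm0) ?_
        have e1 : ((m:ℝ) * (Nat.choose (m - 1) k : ℝ)) ^ 2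
            = ((Nat.choose m k : ℝ) * ((m:ℝ) - k)) ^ 2 := by rw [hA']
        have e2 : ((m:ℝ) * (Nat.choose (m - 1) k' : ℝ)) ^ 2
            = ((Nat.choose m k : ℝ) * (k:ℝ)) ^ 2 := by rw [hB']
        linear_combination (-(m:ℝ)) * e1 + (m:ℝ) * e2
      simp only [hh, Nat.add_sub_cancel, hk']
      norm_num
      push_cast [hk'] at hcore
      linear_combination (((m:ℝ) - 2 * ((k':ℝ) + 1)) * ((Nat.choose m (k' + 1) : ℝ)) ^ 2) * h24
        + ((4:ℝ) / 4 ^ m) * hcore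
  rw [Finset.sum_congr rfl hterm, ← Finset.mul_sum, Finset.sum_range_sub]
  have hh0 : h 0 = 0 := by simp [hh]
  have hhK : h (K + 1) = (m : ℝ) * (Nat.choose (m - 1) K : ℝ) ^ 2 := by simp [hh]
  rw [hh0, hhK, sub_zero]
  obtain ⟨n, rfl⟩ : ∃ n, m = n + 1 := ⟨m - 1, by omega⟩
  simp only [Nat.add_sub_cancel]
  rw [pow_succ]
  field_simp
end

section
/- Let m ≥ 1 be a natural number and for j ∈ ℕ \ {0} define d_j = (1/π) ∫₀^{2π} (cos η)^{m-1} sin η sin(jη) dη. Then ∑_{j=1}^m (1/j) d_j² = (1 / (m · 4^{m-1})) · C(m-1, ⌊(m-1)/2⌋)², where C denotes the binomial coefficient. -/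
open Real intervalIntegral

noncomputable def Gaux (n j : ℕ) : ℝ :=
  if (n + j) % 2 = 0 ∧ j ≤ n then (n.choose ((n-j)/2) : ℝ) else 0

lemma Gaux_rec (n j : ℕ) (hj : 1 ≤ j) : Gaux (n+1) j = Gaux n (j+1) + Gaux n (j-1) := by
  unfold Gaux
  by_cases hp : (n + 1 + j) % 2 = 0
  · by_cases hle : j ≤ n + 1
    · rcases Nat.eq_or_lt_of_le hle with he | hlt
      · rw [if_pos ⟨hp, hle⟩, if_neg (by omega), if_pos ⟨by omega, by omega⟩]
        have e1 : (n + 1 - j)/2 = 0 := by omega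
        have e2 : (n - (j-1))/2 = 0 := by omega
        rw [e1, e2]; simp
      · have hjn : j ≤ n := by omega
        rw [if_pos ⟨hp, hle⟩, if_pos ⟨by omega, by omega⟩, if_pos ⟨by omega, by omega⟩]
        have hk : ∃ k, n + 1 - j = 2*k + 2 := by
          refine ⟨(n - 1 - j)/2, ?_⟩; omega
        obtain ⟨k, hk⟩ := hk
        have e1 : (n + 1 - j)/2 = k + 1 := by omega
        have e2 : (n - (j+1))/2 = k := by omega
        have e3 : (n - (j-1))/2 = k + 1 := by omega
        rw [e1, e2, e3]
        rw [show n + 1 = (n) + 1 from rfl, Nat.choose_succ_succ]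
        push_cast; ring
    · rw [if_neg (by omega), if_neg (by omega), if_neg (by omega)]; simp
  · rw [if_neg (by tauto), if_neg (by omega), if_neg (by omega)]; simp

lemma Gaux_zero (n : ℕ) : Gaux (n+1) 0 = 2 * Gaux n 1 := by
  unfold Gaux
  by_cases hp : (n + 1) % 2 = 0
  · rw [if_pos ⟨by omega, by omega⟩, if_pos ⟨by omega, by omega⟩]
    obtain ⟨t, ht⟩ : ∃ t, n = 2*t+1 := ⟨(n-1)/2, by omega⟩
    subst ht
    have e1 : (2*t+1+1-0)/2 = t+1 := by omega
    have e2 : (2*t+1-1)/2 = t := by omega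
    rw [e1, e2]
    have : (2*t+1+1).choose (t+1) = (2*t+1).choose t + (2*t+1).choose (t+1) := by
      exact Nat.choose_succ_succ _ _
    rw [this, Nat.choose_symm_half]
    push_cast; ring
  · rw [if_neg (by omega), if_neg (by omega)]; simp

lemma intCos_aux (k : ℕ) : ∫ η in (0:ℝ)..(2*π), Real.cos (k*η) = if k = 0 then 2*π else 0 := by
  rcases Nat.eq_zero_or_pos k with hk | hk
  · simp [hk]
  · have hk0 : (k:ℝ) ≠ 0 := by positivity
    rw [if_neg (by omega)]
    rw [intervalIntegral.integral_comp_mul_left (fun x => Real.cos x) hk0]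
    rw [integral_cos]
    have : (k:ℝ) * (2*π) = (2*k : ℕ) * π := by push_cast; ring
    rw [this, Real.sin_nat_mul_pi]
    simp

lemma integrable_aux (f : ℝ → ℝ) (hf : Continuous f) :
    IntervalIntegrable f MeasureTheory.volume 0 (2*π) := hf.intervalIntegrable _ _

lemma intJ_aux : ∀ n j : ℕ, (∫ η in (0:ℝ)..(2*π), Real.cos η ^ n * Real.cos (j*η))
    = (2*π) / 2^n * Gaux n j := by
  intro n
  induction n with
  | zero =>
    intro j
    simp only [pow_zero, one_mul, pow_zero]
    rw [intCos_aux]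
    unfold Gaux
    rcases Nat.eq_zero_or_pos j with hj | hj
    · subst hj; rw [if_pos rfl, if_pos ⟨rfl, le_refl 0⟩]; simp
    · rw [if_neg (by omega), if_neg (by omega)]; simp
  | succ n ih =>
    intro j
    rcases Nat.eq_zero_or_pos j with hj | hj
    · subst hj
      have : ∀ η : ℝ, Real.cos η ^ (n+1) * Real.cos ((0:ℕ)*η)
          = Real.cos η ^ n * Real.cos ((1:ℕ)*η) := by
        intro η; push_cast; rw [pow_succ]; simp
      rw [intervalIntegral.integral_congr (fun η _ => this η), ih 1, Gaux_zero]
      ring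
    · have key : ∀ η : ℝ, Real.cos η ^ (n+1) * Real.cos (j*η)
          = (Real.cos η ^ n * Real.cos ((j+1:ℕ)*η) + Real.cos η ^ n * Real.cos ((j-1:ℕ)*η)) / 2 := by
        intro η
        have hc : ((j-1:ℕ):ℝ) = (j:ℝ) - 1 := by
          have : (1:ℕ) ≤ j := hj
          push_cast [Nat.cast_sub this]; ring
        have h1 : Real.cos ((j+1:ℕ)*η) = Real.cos ((j:ℝ)*η + η) := by push_cast; ring_nf
        have h2 : Real.cos ((j-1:ℕ)*η) = Real.cos ((j:ℝ)*η - η) := by rw [hc]; ring_nf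
        rw [h1, h2, Real.cos_add, Real.cos_sub, pow_succ]
        ring
      rw [intervalIntegral.integral_congr (fun η _ => key η)]
      rw [intervalIntegral.integral_div]
      rw [intervalIntegral.integral_add (integrable_aux _ (by continuity)) (integrable_aux _ (by continuity))]
      rw [ih (j+1), ih (j-1), Gaux_rec n j hj]
      ring

lemma intParts_aux (m j : ℕ) (hm : 1 ≤ m) :
    (∫ η in (0:ℝ)..(2*π), Real.cos η ^ (m-1) * Real.sin η * Real.sin (j*η))
      = (j:ℝ)/m * ∫ η in (0:ℝ)..(2*π), Real.cos η ^ m * Real.cos (j*η) := by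
  have hm0 : (m:ℝ) ≠ 0 := by positivity
  have hu : ∀ x ∈ Set.uIcc (0:ℝ) (2*π), HasDerivAt (fun η => Real.sin ((j:ℝ)*η))
      ((j:ℝ) * Real.cos ((j:ℝ)*x)) x := by
    intro x _
    have := (Real.hasDerivAt_sin ((j:ℝ)*x)).comp x ((hasDerivAt_id x).const_mul (j:ℝ))
    refine this.congr_deriv ?_
    simp [mul_comm]
  have hv : ∀ x ∈ Set.uIcc (0:ℝ) (2*π), HasDerivAt (fun η => -(Real.cos η ^ m / m))
      (Real.cos x ^ (m-1) * Real.sin x) x := by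
    intro x _
    have := (((Real.hasDerivAt_cos x).pow m).div_const (m:ℝ)).neg
    refine this.congr_deriv ?_
    field_simp
  have H := intervalIntegral.integral_mul_deriv_eq_deriv_mul hu hv
    (integrable_aux _ (by continuity)) (integrable_aux _ (by continuity))
  have hz1 : Real.sin ((j:ℝ)*(2*π)) = 0 := by
    have : (j:ℝ) * (2*π) = ((2*j:ℕ):ℝ) * π := by push_cast; ring
    rw [this, Real.sin_nat_mul_pi]
  have e1 : (∫ η in (0:ℝ)..(2*π), Real.cos η ^ (m-1) * Real.sin η * Real.sin ((j:ℕ)*η))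
      = ∫ x in (0:ℝ)..(2*π), Real.sin ((j:ℝ)*x) * (Real.cos x ^ (m-1) * Real.sin x) := by
    apply intervalIntegral.integral_congr
    intro x _; push_cast; ring
  rw [e1, H, hz1]
  simp only [mul_zero, Real.sin_zero, zero_mul, zero_sub, sub_zero, mul_zero, zero_mul]
  rw [← intervalIntegral.integral_neg]
  rw [show ((j:ℝ)/m * ∫ η in (0:ℝ)..(2*π), Real.cos η ^ m * Real.cos ((j:ℕ)*η))
      = ∫ η in (0:ℝ)..(2*π), (j:ℝ)/m * (Real.cos η ^ m * Real.cos ((j:ℕ)*η)) from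
    (intervalIntegral.integral_const_mul _ _).symm]
  apply intervalIntegral.integral_congr
  intro x _
  field_simp

lemma key_sum_aux (m : ℕ) (hm : 1 ≤ m) : ∀ K : ℕ, 2*K+1 ≤ m →
    ∑ k ∈ Finset.range (K+1), ((m:ℝ) - 2*k) * (m.choose k : ℝ)^2
      = (m:ℝ) * (((m-1).choose K : ℝ))^2 := by
  intro K
  induction K with
  | zero => intro _; simp
  | succ K ih =>
    intro hK
    have hK' : 2*K+1 ≤ m := by omega
    rw [Finset.sum_range_succ, ih hK']
    have hm0 : (m:ℝ) ≠ 0 := by positivity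
    set C : ℝ := (m.choose (K+1) : ℝ) with hC
    set c1 : ℝ := ((m-1).choose K : ℝ) with hc1
    set c2 : ℝ := ((m-1).choose (K+1) : ℝ) with hc2
    have hA : ((K:ℝ)+1) * C = (m:ℝ) * c1 := by
      have h := congrArg (fun x : ℕ => (x:ℝ)) (Nat.add_one_mul_choose_eq (m-1) K)
      rw [Nat.sub_add_cancel hm] at h
      push_cast at h
      rw [hC, hc1]
      linarith [h]
    have hB : ((m:ℝ) - ((K:ℝ)+1)) * C = (m:ℝ) * c2 := by
      have h := congrArg (fun x : ℕ => (x:ℝ)) (Nat.choose_mul_succ_eq (m-1) (K+1))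
      rw [Nat.sub_add_cancel hm] at h
      have hle : K + 1 ≤ m := by omega
      push_cast [Nat.cast_sub hle] at h
      rw [hC, hc2]
      linarith [h]
    apply mul_left_cancel₀ hm0
    push_cast
    linear_combination (((m:ℝ)-((K:ℝ)+1))*C + (m:ℝ)*c2) * hB
      - (((K:ℝ)+1)*C + (m:ℝ)*c1) * hA

lemma reindex_aux (m : ℕ) (hm : 1 ≤ m) :
    ∑ j ∈ Finset.Icc 1 m, (j:ℝ) * (Gaux m j)^2
      = ∑ k ∈ Finset.range ((m-1)/2 + 1), ((m:ℝ) - 2*k) * (m.choose k : ℝ)^2 := by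
  rw [← Finset.sum_filter_of_ne (p := fun j => (m + j) % 2 = 0)
    (fun j hj hne => by
      by_contra hp
      apply hne
      unfold Gaux
      rw [if_neg (by tauto)]
      simp)]
  apply Finset.sum_nbij' (i := fun j => (m-j)/2) (j := fun k => m - 2*k)
  · intro j hj
    simp only [Finset.mem_filter, Finset.mem_Icc] at hj
    simp only [Finset.mem_range]
    omega
  · intro k hk
    simp only [Finset.mem_range] at hk
    simp only [Finset.mem_filter, Finset.mem_Icc]
    omega
  · intro j hj
    simp only [Finset.mem_filter, Finset.mem_Icc] at hj
    omega
  · intro k hk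
    simp only [Finset.mem_range] at hk
    omega
  · intro j hj
    simp only [Finset.mem_filter, Finset.mem_Icc] at hj
    unfold Gaux
    rw [if_pos ⟨hj.2, hj.1.2⟩]
    have h1 : 2 * ((m-j)/2) = m - j := by omega
    have h2 : ((m:ℝ) - 2 * (((m-j)/2 : ℕ):ℝ)) = (j:ℝ) := by
      have : ((2 * ((m-j)/2) : ℕ) : ℝ) = ((m:ℝ) - (j:ℝ)) := by
        rw [h1]; push_cast [Nat.cast_sub hj.1.2]; ring
      push_cast at this ⊢
      linarith
    rw [h2]

/-- For `m ≥ 1` and `d j = (1/π) ∫₀^{2π} (cos η)^{m-1} sin η sin (j η) dη`, one has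
`∑_{j=1}^m (1/j) d_j² = (1 / (m · 4^{m-1})) · C(m-1, ⌊(m-1)/2⌋)²`. -/
theorem sum_inv_j_dj_sq (m : ℕ) (hm : 1 ≤ m) (d : ℕ → ℝ)
    (hd : ∀ j : ℕ, 1 ≤ j → d j =
      (1 / π) * ∫ η in (0:ℝ)..(2 * π),
        (Real.cos η) ^ (m - 1) * Real.sin η * Real.sin (j * η)) :
    ∑ j ∈ Finset.Icc 1 m, (1 / (j : ℝ)) * (d j) ^ 2
      = (1 / ((m : ℝ) * 4 ^ (m - 1))) * ((Nat.choose (m - 1) ((m - 1) / 2) : ℝ)) ^ 2 := by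
  have hpi : (π:ℝ) ≠ 0 := Real.pi_ne_zero
  have hm0 : (m:ℝ) ≠ 0 := by positivity
  have hdval : ∀ j : ℕ, 1 ≤ j → d j = (j:ℝ)/m * (2 / 2^m) * Gaux m j := by
    intro j hj
    rw [hd j hj, intParts_aux m j hm, intJ_aux m j]
    field_simp
  have hstep : ∑ j ∈ Finset.Icc 1 m, (1 / (j : ℝ)) * (d j) ^ 2
      = (4 / ((m:ℝ)^2 * 4^m)) * ∑ j ∈ Finset.Icc 1 m, (j:ℝ) * (Gaux m j)^2 := by
    rw [Finset.mul_sum]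
    apply Finset.sum_congr rfl
    intro j hj
    simp only [Finset.mem_Icc] at hj
    have hj0 : (j:ℝ) ≠ 0 := by
      have := hj.1; positivity
    rw [hdval j hj.1]
    have h4 : (4:ℝ)^m = (2^m)^2 := by
      rw [← pow_mul, show (4:ℝ) = 2^2 by norm_num, ← pow_mul, mul_comm]
    rw [h4]
    have h2m : (2:ℝ)^m ≠ 0 := by positivity
    field_simp
    ring
  rw [hstep, reindex_aux m hm, key_sum_aux m hm ((m-1)/2) (by omega)]
  have h4 : (4:ℝ)^m = 4 * 4^(m-1) := by
    conv_lhs => rw [show m = (m-1) + 1 by omega]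
    rw [pow_succ]
    ring
  have h4m : (4:ℝ)^(m-1) ≠ 0 := by positivity
  rw [h4]
  field_simp
end

section
/- Let T_m be a homogeneous polynomial of degree m with T_m(cos t, sin t) = β sin(m(t - α₀)) for all t, where β ≠ 0 and α₀ ∈ [0, 2π). If α₀ = jπ/m for some integer j, then ∂T_m/∂x₁^m(0) = 0 (i.e. the coefficient of x₁^m vanishes) and β = (-1)^j (1/m!) ∂^m T_m / (∂x₁^{m-1} ∂x₂)(0). -/
open Real

/-- Let `T_m(x₁,x₂) = ∑_{i=0}^m ℓ_i x₁^{m-i} x₂^i` be a homogeneous polynomial of degree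
`m ≥ 1` with `T_m(cos t, sin t) = β sin(m(t - α₀))` for all `t`, where `β ≠ 0` and
`α₀ ∈ [0, 2π)`. If `α₀ = jπ/m` for some integer `j`, then the coefficient of `x₁^m`
vanishes (i.e. `∂^m T_m/∂x₁^m (0) = m! ℓ₀ = 0`) and
`β = (-1)^j (1/m!) ∂^m T_m/(∂x₁^{m-1}∂x₂)(0) = (-1)^j (m-1)! ℓ₁ / m!`. -/
theorem homogeneous_poly_nodal_case (m : ℕ) (hm : 1 ≤ m) (β α₀ : ℝ) (hβ : β ≠ 0)
    (hα₀ : α₀ ∈ Set.Ico (0:ℝ) (2 * π)) (ℓ : ℕ → ℝ)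
    (hT : ∀ t : ℝ,
      ∑ i ∈ Finset.range (m + 1), ℓ i * (Real.cos t) ^ (m - i) * (Real.sin t) ^ i
        = β * Real.sin (m * (t - α₀)))
    (j : ℤ) (hj : α₀ = j * π / m) :
    ℓ 0 = 0 ∧
      β = (-1 : ℝ) ^ j * ((Nat.factorial (m - 1) : ℝ) * ℓ 1) / (Nat.factorial m : ℝ) := by
  have hm0 : (m : ℝ) ≠ 0 := by positivity
  have hma : (m : ℝ) * α₀ = j * π := by rw [hj]; field_simp
  have hsin : Real.sin ((m : ℝ) * α₀) = 0 := by
    rw [hma]; exact Real.sin_int_mul_pi j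
  have hcos : Real.cos ((m : ℝ) * α₀) = (-1 : ℝ) ^ j := by
    rw [hma, show (j:ℝ) * π = 0 + j * π by ring, Real.cos_add_int_mul_pi]
    simp
  -- Part 1
  have h0 := hT 0
  rw [Finset.sum_eq_single_of_mem 0 (Finset.mem_range.2 (Nat.succ_pos m))
    (by intro i _ hi; simp [zero_pow hi])] at h0
  simp at h0
  have hℓ0 : ℓ 0 = 0 := by rw [h0, hsin]; ring
  refine ⟨hℓ0, ?_⟩
  -- Part 2: derivatives at 0
  have hL : HasDerivAt (fun t => ∑ i ∈ Finset.range (m + 1),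
      ℓ i * (Real.cos t) ^ (m - i) * (Real.sin t) ^ i) (ℓ 1) 0 := by
    have hsum : HasDerivAt (fun t => ∑ i ∈ Finset.range (m + 1),
        ℓ i * (Real.cos t) ^ (m - i) * (Real.sin t) ^ i)
        (∑ i ∈ Finset.range (m + 1), if i = 1 then ℓ 1 else 0) 0 := by
      apply HasDerivAt.fun_sum
      intro i _
      have h1 : HasDerivAt (fun t : ℝ => Real.cos t ^ (m - i))
          ((↑(m - i) : ℝ) * Real.cos 0 ^ (m - i - 1) * (-Real.sin 0)) 0 :=
        (Real.hasDerivAt_cos 0).pow _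
      have h2 : HasDerivAt (fun t : ℝ => Real.sin t ^ i)
          ((i : ℝ) * Real.sin 0 ^ (i - 1) * Real.cos 0) 0 :=
        (Real.hasDerivAt_sin 0).pow _
      have h3 := (h1.mul h2).const_mul (ℓ i)
      convert h3 using 1
      · rfl
      · funext t; rw [Pi.mul_apply]; ring
      · rcases i with _ | _ | i
        · simp
        · simp
        · simp [zero_pow (Nat.succ_ne_zero i)]
    simpa [Finset.sum_ite_eq' (Finset.range (m + 1)) 1,
      Finset.mem_range.2 (Nat.lt_succ_of_le hm)] using hsum
  have hR : HasDerivAt (fun t : ℝ => β * Real.sin ((m : ℝ) * (t - α₀)))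
      (β * (Real.cos ((m : ℝ) * (0 - α₀)) * ((m : ℝ) * 1))) 0 := by
    exact ((((hasDerivAt_id 0).sub_const α₀).const_mul (m : ℝ)).sin).const_mul β
  rw [show (fun t => ∑ i ∈ Finset.range (m + 1),
      ℓ i * (Real.cos t) ^ (m - i) * (Real.sin t) ^ i)
      = fun t : ℝ => β * Real.sin ((m : ℝ) * (t - α₀)) from funext hT] at hL
  have hℓ1 : ℓ 1 = β * (m : ℝ) * (-1 : ℝ) ^ j := by
    have := hL.unique hR
    rw [show (m : ℝ) * (0 - α₀) = -((m:ℝ) * α₀) by ring, Real.cos_neg, hcos] at this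
    rw [this]; ring
  have hfac : (Nat.factorial m : ℝ) = (m : ℝ) * (Nat.factorial (m - 1) : ℝ) := by
    rw [← Nat.cast_mul, ← Nat.succ_pred_eq_of_pos hm]
    simp [Nat.factorial_succ]
  have hpow : ((-1 : ℝ) ^ j) * ((-1 : ℝ) ^ j) = 1 := by
    rw [← zpow_add₀ (by norm_num : (-1 : ℝ) ≠ 0)]
    exact Even.neg_one_zpow ⟨j, rfl⟩
  have hfacne : ((Nat.factorial (m - 1) : ℝ)) ≠ 0 := by positivity
  rw [hℓ1, hfac]
  field_simp
  ring_nf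
  rw [sq, hpow]
end

section
/- Let k₁ be an odd natural number and let D₂ \ D₁ ⊂ ℝ² be the annulus with radii 1 and 2 centered at the origin, cut by k₁ distinct half-lines Γ₀^j = {t a^j : t ≤ 0} through the origin with distinct directions. If w ∈ H¹((D₂ \ D₁) \ ⋃_j Γ₀^j) is locally constant (i.e., ∇w = 0 on each connected component) and the sum of the two one-sided traces of w across each half-line Γ₀^j vanishes for every j = 1, …, k₁, then w ≡ 0. -/
open Real Filter Topology

private noncomputable def ee (θ : ℝ) : ℝ × ℝ := (Real.cos θ, Real.sin θ)
private def qq (x : ℝ × ℝ) : ℝ := x.1 ^ 2 + x.2 ^ 2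
private noncomputable def cc (x : ℝ × ℝ) : ℂ := ⟨x.1, x.2⟩

private lemma cc_re (x : ℝ × ℝ) : (cc x).re = x.1 := rfl
private lemma cc_im (x : ℝ × ℝ) : (cc x).im = x.2 := rfl

private lemma cc_def (x : ℝ × ℝ) : cc x = (x.1 : ℂ) + x.2 * Complex.I := by
  apply Complex.ext <;> simp [cc_re, cc_im]

private lemma cc_e (θ : ℝ) : cc (ee θ) = Complex.exp (θ * Complex.I) := by
  rw [Complex.exp_mul_I]
  apply Complex.ext <;>
    simp [cc, ee, Complex.cos_ofReal_re, Complex.sin_ofReal_im,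
      Complex.cos_ofReal_im, Complex.sin_ofReal_re]

private lemma cc_eq_zero {x : ℝ × ℝ} : cc x = 0 ↔ x = 0 := by
  constructor
  · intro h; have h1 := congrArg Complex.re h; have h2 := congrArg Complex.im h
    simp [cc_re, cc_im] at h1 h2; exact Prod.ext h1 h2
  · rintro rfl; apply Complex.ext <;> simp [cc_re, cc_im]

private lemma abs_cc (x : ℝ × ℝ) : ‖cc x‖ = Real.sqrt (qq x) := by
  rw [Complex.norm_def, Complex.normSq_apply, cc_re, cc_im, qq]; ring_nf

private lemma qq_smul (s : ℝ) (x : ℝ × ℝ) : qq (s • x) = s ^ 2 * qq x := by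
  simp [qq, Prod.smul_fst, Prod.smul_snd, smul_eq_mul]; ring

private lemma qq_e (θ : ℝ) : qq (ee θ) = 1 := by
  simp only [qq, ee]; exact Real.cos_sq_add_sin_sq θ

private lemma qq_pos {x : ℝ × ℝ} (hx : x ≠ 0) : 0 < qq x := by
  have h : x.1 ≠ 0 ∨ x.2 ≠ 0 := by
    by_contra hc; push_neg at hc
    exact hx (Prod.ext hc.1 hc.2)
  rcases h with h | h
  · have := pow_two_pos_of_ne_zero h; have := sq_nonneg x.2
    simp only [qq]; linarith
  · have := pow_two_pos_of_ne_zero h; have := sq_nonneg x.1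
    simp only [qq]; linarith

private lemma cc_smul (s : ℝ) (x : ℝ × ℝ) : cc (s • x) = (s : ℂ) * cc x := by
  apply Complex.ext <;> simp [cc_re, cc_im, Prod.smul_fst, Prod.smul_snd, smul_eq_mul]

private lemma cont_cc : Continuous cc := by
  have : cc = fun x : ℝ × ℝ => (x.1 : ℂ) + x.2 * Complex.I := by
    funext x; exact cc_def x
  rw [this]; continuity

private lemma cont_ee : Continuous ee := by
  unfold ee; continuity

private lemma hcos_phi (v : ℝ × ℝ) :
    ‖cc v‖ * Real.cos ((-(cc v)).arg) = -v.1 ∧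
    ‖cc v‖ * Real.sin ((-(cc v)).arg) = -v.2 := by
  have h := Complex.norm_mul_exp_arg_mul_I (-(cc v))
  rw [Complex.exp_mul_I] at h
  have hab : ‖-(cc v)‖ = ‖cc v‖ := by simp
  rw [hab] at h
  constructor
  · have := congrArg Complex.re h
    simpa [cc_re, Complex.cos_ofReal_re, Complex.sin_ofReal_re,
      Complex.cos_ofReal_im, Complex.sin_ofReal_im] using this
  · have := congrArg Complex.im h
    simpa [cc_im, Complex.cos_ofReal_re, Complex.sin_ofReal_re,
      Complex.cos_ofReal_im, Complex.sin_ofReal_im] using this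

private lemma abs_cc_pos {v : ℝ × ℝ} (hv : v ≠ 0) : 0 < ‖cc v‖ := by
  rw [norm_pos_iff]
  exact fun h => hv (cc_eq_zero.mp h)

private lemma cross_formula (v : ℝ × ℝ) (R ψ : ℝ) :
    v.1 * (R • ee ψ).2 - v.2 * (R • ee ψ).1 =
      -(‖cc v‖) * R * Real.sin (ψ - (-(cc v)).arg) := by
  obtain ⟨h1, h2⟩ := hcos_phi v
  have e1 : (R • ee ψ).1 = R * Real.cos ψ := rfl
  have e2 : (R • ee ψ).2 = R * Real.sin ψ := rfl
  rw [e1, e2, Real.sin_sub]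
  linear_combination (R * Real.sin ψ) * h1 - (R * Real.cos ψ) * h2

private lemma memGamma {v : ℝ × ℝ} (hv : v ≠ 0) (r θ : ℝ) (hr : 0 < r) :
    (∃ t : ℝ, t ≤ 0 ∧ r • ee θ = t • v) ↔ ∃ n : ℤ, θ = (-(cc v)).arg + 2 * π * n := by
  have habs := abs_cc_pos hv
  constructor
  · rintro ⟨t, ht, heq⟩
    have hq : r ^ 2 = t ^ 2 * qq v := by
      have := congrArg qq heq
      rwa [qq_smul, qq_smul, qq_e, mul_one] at this
    have ht0 : t ≠ 0 := by
      rintro rfl; rw [ne_eq] at hv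
      nlinarith [qq_pos hv]
    have htneg : t < 0 := lt_of_le_of_ne ht ht0
    have hceq : (r : ℂ) * Complex.exp (θ * Complex.I) = (t : ℂ) * cc v := by
      rw [← cc_e, ← cc_smul, ← cc_smul, heq]
    have ht0c : (t : ℂ) ≠ 0 := Complex.ofReal_ne_zero.mpr ht0
    have hpos : (0:ℝ) < r / (-t) := div_pos hr (by linarith)
    have hneg : -(cc v) = ((r / (-t) : ℝ) : ℂ) * Complex.exp (θ * Complex.I) := by
      have hccv : cc v = ((r / t : ℝ) : ℂ) * Complex.exp (θ * Complex.I) := by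
        push_cast
        rw [div_mul_eq_mul_div, eq_div_iff ht0c]
        linear_combination -hceq
      have hre : r / (-t) = -(r / t) := by rw [div_neg]
      rw [hre, hccv]; push_cast; ring
    have habsu : ‖-(cc v)‖ = r / (-t) := by
      rw [hneg, norm_mul, Complex.norm_real, Real.norm_eq_abs, Complex.norm_exp_ofReal_mul_I,
        abs_of_pos hpos, mul_one]
    have hexp : Complex.exp (((-(cc v)).arg : ℂ) * Complex.I)
        = Complex.exp (θ * Complex.I) := by
      have h5 := Complex.norm_mul_exp_arg_mul_I (-(cc v))
      rw [habsu] at h5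
      have h6 := h5.trans hneg
      exact mul_left_cancel₀ (by simpa using ne_of_gt hpos) h6
    obtain ⟨n, hn⟩ := Complex.exp_eq_exp_iff_exists_int.mp hexp.symm
    have him : θ = (-(cc v)).arg + n * (2 * π) := by
      have := congrArg Complex.im hn
      push_cast at this
      simpa using this
    exact ⟨n, by linarith⟩
  · rintro ⟨n, rfl⟩
    obtain ⟨h1, h2⟩ := hcos_phi v
    have hdivpos : (0:ℝ) < r / ‖cc v‖ := div_pos hr habs
    refine ⟨-(r / ‖cc v‖), by linarith, ?_⟩
    have hc : Real.cos ((-(cc v)).arg + 2 * π * n) = Real.cos ((-(cc v)).arg) := by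
      have h : (-(cc v)).arg + 2 * π * n = (-(cc v)).arg + (n : ℝ) * (2 * π) := by ring
      rw [h, Real.cos_add_int_mul_two_pi]
    have hs : Real.sin ((-(cc v)).arg + 2 * π * n) = Real.sin ((-(cc v)).arg) := by
      have h : (-(cc v)).arg + 2 * π * n = (-(cc v)).arg + (n : ℝ) * (2 * π) := by ring
      rw [h, Real.sin_add_int_mul_two_pi]
    have hane : ‖cc v‖ ≠ 0 := ne_of_gt habs
    apply Prod.ext
    · show r * Real.cos _ = -(r / ‖cc v‖) * v.1
      rw [hc]; field_simp; linear_combination h1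
    · show r * Real.sin _ = -(r / ‖cc v‖) * v.2
      rw [hs]; field_simp; linear_combination h2

private lemma finmin {S : Set ℝ} (hS : S.Finite) (α : ℝ) (h : ∀ x ∈ S, x ≠ α) :
    ∃ δ : ℝ, 0 < δ ∧ δ ≤ 1 ∧ ∀ x ∈ S, δ ≤ |x - α| := by
  classical
  set T : Finset ℝ := insert 1 (hS.toFinset.image fun x => |x - α|) with hT
  have hTne : T.Nonempty := ⟨1, Finset.mem_insert_self _ _⟩
  refine ⟨T.min' hTne, ?_, ?_, ?_⟩
  · rw [Finset.lt_min'_iff]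
    intro y hy
    rcases Finset.mem_insert.mp hy with rfl | hy
    · norm_num
    · obtain ⟨x, hx, rfl⟩ := Finset.mem_image.mp hy
      exact abs_pos.mpr (sub_ne_zero.mpr (h x (hS.mem_toFinset.mp hx)))
  · exact T.min'_le 1 (Finset.mem_insert_self _ _)
  · intro x hx
    exact T.min'_le _ (Finset.mem_insert_of_mem (Finset.mem_image_of_mem _ (hS.mem_toFinset.mpr hx)))

private lemma coset_finite (β θ₁ θ₂ : ℝ) :
    ({x : ℝ | ∃ n : ℤ, x = β + 2 * π * n} ∩ Set.Ioo θ₁ θ₂).Finite := by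
  have hπ : (0:ℝ) < 2 * π := by positivity
  apply Set.Finite.subset (Set.Finite.image (fun n : ℤ => β + 2 * π * n)
    (Set.finite_Icc ⌈(θ₁ - β) / (2 * π)⌉ ⌊(θ₂ - β) / (2 * π)⌋))
  rintro x ⟨⟨n, rfl⟩, h1, h2⟩
  refine ⟨n, ⟨?_, ?_⟩, rfl⟩
  · rw [Int.ceil_le, div_le_iff₀ hπ]; linarith
  · rw [Int.le_floor, le_div_iff₀ hπ]; linarith

private lemma coset_unique (β θ : ℝ) (h : ∀ n : ℤ, θ ≠ β + 2 * π * n) :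
    ∃! n : ℤ, β + 2 * π * n ∈ Set.Ioo θ (θ + 2 * π) := by
  have hπ : (0:ℝ) < 2 * π := by positivity
  have hfl : (⌊(θ - β) / (2 * π)⌋ : ℝ) * (2 * π) ≤ θ - β := by
    have := Int.floor_le ((θ - β) / (2 * π))
    rw [le_div_iff₀ hπ] at this; linarith
  have hfu : θ - β < ((⌊(θ - β) / (2 * π)⌋ : ℝ) + 1) * (2 * π) := by
    have := Int.lt_floor_add_one ((θ - β) / (2 * π))
    rw [div_lt_iff₀ hπ] at this; linarith
  have hne : (θ - β) / (2 * π) ≠ (⌊(θ - β) / (2 * π)⌋ : ℝ) := by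
    intro hc
    apply h ⌊(θ - β) / (2 * π)⌋
    rw [div_eq_iff (ne_of_gt hπ)] at hc
    linarith
  have hflstrict : (⌊(θ - β) / (2 * π)⌋ : ℝ) * (2 * π) < θ - β := by
    rcases lt_or_eq_of_le hfl with h' | h'
    · exact h'
    · exfalso; apply hne; symm; rw [eq_div_iff (ne_of_gt hπ)]; linarith
  refine ⟨⌊(θ - β) / (2 * π)⌋ + 1, ⟨?_, ?_⟩, ?_⟩
  · push_cast; nlinarith
  · push_cast; nlinarith
  · intro m ⟨hm1, hm2⟩
    have h1 : θ < β + 2 * π * m := hm1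
    have h2 : β + 2 * π * m < θ + 2 * π := hm2
    have hl : (⌊(θ - β) / (2 * π)⌋ : ℝ) < m := by nlinarith
    have hg : (m : ℝ) < (⌊(θ - β) / (2 * π)⌋ : ℝ) + 2 := by nlinarith
    have hl' : ⌊(θ - β) / (2 * π)⌋ < m := by exact_mod_cast hl
    have hg' : (m : ℤ) < ⌊(θ - β) / (2 * π)⌋ + 2 := by exact_mod_cast hg
    omega

private lemma engine {D : Set (ℝ × ℝ)} {w : ℝ × ℝ → ℝ}
    (hw : IsLocallyConstant (fun x : D => w x))
    (g : ℝ → ℝ × ℝ) (hg : Continuous g) (s : Set ℝ) (hs : IsPreconnected s)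
    (hsub : ∀ t ∈ s, g t ∈ D) {t₁ t₂ : ℝ} (h1 : t₁ ∈ s) (h2 : t₂ ∈ s) :
    w (g t₁) = w (g t₂) := by
  have hK : IsPreconnected (g '' s) := hs.image g hg.continuousOn
  have hKD : g '' s ⊆ D := by rintro y ⟨t, ht, rfl⟩; exact hsub t ht
  have hpre : IsPreconnected ((Subtype.val : D → ℝ × ℝ) ⁻¹' (g '' s)) := by
    rw [← Topology.IsInducing.isPreconnected_image Topology.IsInducing.subtypeVal]
    rwa [Subtype.image_preimage_coe, Set.inter_eq_self_of_subset_right hKD]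
  exact hw.apply_eq_of_isPreconnected hpre
    (x := ⟨g t₁, hsub t₁ h1⟩) (y := ⟨g t₂, hsub t₂ h2⟩)
    (Set.mem_preimage.mpr (Set.mem_image_of_mem g h1))
    (Set.mem_preimage.mpr (Set.mem_image_of_mem g h2))

private lemma hcos_arg (x : ℝ × ℝ) :
    ‖cc x‖ * Real.cos ((cc x).arg) = x.1 ∧
    ‖cc x‖ * Real.sin ((cc x).arg) = x.2 := by
  have h := Complex.norm_mul_exp_arg_mul_I (cc x)
  rw [Complex.exp_mul_I] at h
  constructor
  · have := congrArg Complex.re h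
    simpa [cc_re, Complex.cos_ofReal_re, Complex.sin_ofReal_re,
      Complex.cos_ofReal_im, Complex.sin_ofReal_im] using this
  · have := congrArg Complex.im h
    simpa [cc_im, Complex.cos_ofReal_re, Complex.sin_ofReal_re,
      Complex.cos_ofReal_im, Complex.sin_ofReal_im] using this

private lemma ee_per (θ : ℝ) (n : ℤ) : ee (θ + 2 * π * n) = ee θ := by
  have h : θ + 2 * π * n = θ + (n : ℝ) * (2 * π) := by ring
  unfold ee
  rw [h, Real.cos_add_int_mul_two_pi, Real.sin_add_int_mul_two_pi]

private lemma rep_of_eq {y : ℝ × ℝ} {ψ : ℝ}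
    (h : (‖cc y‖ : ℂ) * Complex.exp ((ψ : ℂ) * Complex.I) = cc y) :
    y = Real.sqrt (qq y) • ee ψ := by
  rw [← abs_cc]
  rw [Complex.exp_mul_I] at h
  apply Prod.ext
  · show y.1 = ‖cc y‖ * Real.cos ψ
    have := congrArg Complex.re h
    simpa [cc_re, Complex.cos_ofReal_re, Complex.sin_ofReal_re,
      Complex.cos_ofReal_im, Complex.sin_ofReal_im] using this.symm
  · show y.2 = ‖cc y‖ * Real.sin ψ
    have := congrArg Complex.im h
    simpa [cc_im, Complex.cos_ofReal_re, Complex.sin_ofReal_re,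
      Complex.cos_ofReal_im, Complex.sin_ofReal_im] using this.symm

set_option maxHeartbeats 1600000

/-- Let `k₁` be odd and consider the open annulus `{1 < |x| < 2}` cut along `k₁`
half-lines `Γ₀^j = {t • a^j : t ≤ 0}` through the origin with pairwise distinct
directions. If `w` is locally constant on the cut annulus `D` and, across each
half-line, the two one-sided traces of `w` (limits from the sides `±ν^j`, where
`ν^j = (-(a^j)₂, (a^j)₁)`) sum to zero, then `w ≡ 0` on `D`. -/
theorem cut_annulus_locally_constant_vanishes (k₁ : ℕ) (hodd : Odd k₁) (hk : 1 ≤ k₁)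
    (a : Fin k₁ → ℝ × ℝ) (ha : ∀ j, a j ≠ 0)
    (hdir : ∀ i j, i ≠ j → ∀ s : ℝ, 0 < s → a i ≠ s • a j)
    (Γ : Fin k₁ → Set (ℝ × ℝ))
    (hΓ : ∀ j, Γ j = {x : ℝ × ℝ | ∃ t : ℝ, t ≤ 0 ∧ x = t • a j})
    (D : Set (ℝ × ℝ))
    (hD : D = {x : ℝ × ℝ | 1 < x.1 ^ 2 + x.2 ^ 2 ∧ x.1 ^ 2 + x.2 ^ 2 < 4} \ ⋃ j, Γ j)
    (w : ℝ × ℝ → ℝ)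
    (hw : IsLocallyConstant (fun x : D => w x))
    (hjump : ∀ j : Fin k₁, ∀ t : ℝ, t < 0 →
      1 < (t • a j).1 ^ 2 + (t • a j).2 ^ 2 →
      (t • a j).1 ^ 2 + (t • a j).2 ^ 2 < 4 →
      ∃ cp cm : ℝ,
        Tendsto w (𝓝[D ∩ {x : ℝ × ℝ | 0 < (a j).1 * x.2 - (a j).2 * x.1}] (t • a j))
          (𝓝 cp) ∧
        Tendsto w (𝓝[D ∩ {x : ℝ × ℝ | (a j).1 * x.2 - (a j).2 * x.1 < 0}] (t • a j))
          (𝓝 cm) ∧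
        cp + cm = 0) :
    ∀ x ∈ D, w x = 0 := by
  intro x₀ hx₀
  have hπ : (0:ℝ) < π := Real.pi_pos
  set φf : Fin k₁ → ℝ := fun j => (-(cc (a j))).arg with hφf
  set A : Set ℝ := {θ : ℝ | ∃ j : Fin k₁, ∃ n : ℤ, θ = φf j + 2 * π * n} with hAdef
  set F : ℝ → ℝ := fun θ => w ((3/2 : ℝ) • ee θ) with hFdef
  -- membership in D
  have memD : ∀ y : ℝ × ℝ,
      y ∈ D ↔ ((1 < qq y ∧ qq y < 4) ∧ ∀ j, ¬∃ t : ℝ, t ≤ 0 ∧ y = t • a j) := by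
    intro y
    rw [hD]
    constructor
    · rintro ⟨⟨h1, h2⟩, h3⟩
      refine ⟨⟨h1, h2⟩, fun j hc => h3 ?_⟩
      exact Set.mem_iUnion.mpr ⟨j, (hΓ j).symm ▸ hc⟩
    · rintro ⟨⟨h1, h2⟩, h3⟩
      refine ⟨⟨h1, h2⟩, fun hc => ?_⟩
      obtain ⟨j, hj⟩ := Set.mem_iUnion.mp hc
      exact h3 j (by rwa [hΓ j] at hj)
  -- scaled circle points in D
  have hsmulD : ∀ (r ψ : ℝ), 1 < r → r < 2 →
      (∀ j : Fin k₁, ∀ n : ℤ, ψ ≠ φf j + 2 * π * n) → r • ee ψ ∈ D := by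
    intro r ψ h1 h2 hfree
    rw [memD]
    refine ⟨⟨?_, ?_⟩, ?_⟩
    · rw [qq_smul, qq_e, mul_one]; nlinarith
    · rw [qq_smul, qq_e, mul_one]; nlinarith
    · intro j hc
      obtain ⟨n, hn⟩ := (memGamma (ha j) r ψ (by linarith)).mp
        (by obtain ⟨t, ht, hteq⟩ := hc; exact ⟨t, ht, hteq⟩)
      exact hfree j n hn
  -- radial constancy
  have hkey : ∀ y ∈ D, ∀ ψ : ℝ, y = Real.sqrt (qq y) • ee ψ → w y = F ψ := by
    intro y hy ψ hrep
    obtain ⟨⟨hq1, hq4⟩, hΓfree⟩ := (memD y).mp hy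
    set R := Real.sqrt (qq y) with hR
    have hR1 : 1 < R := by
      rw [hR]
      have : (1:ℝ) < Real.sqrt (qq y) ↔ (1:ℝ)^2 < qq y := Real.lt_sqrt (by norm_num)
      rw [this]; nlinarith
    have hR2 : R < 2 := by
      rw [hR]
      have : Real.sqrt (qq y) < 2 ↔ qq y < 2^2 := Real.sqrt_lt' (by norm_num)
      rw [this]; nlinarith
    have hmem : ∀ s ∈ Set.Icc (min R (3/2)) (max R (3/2)), s • ee ψ ∈ D := by
      intro s hs
      have hs1 : 1 < s := lt_of_lt_of_le (lt_min hR1 (by norm_num)) hs.1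
      have hs2 : s < 2 := lt_of_le_of_lt hs.2 (max_lt hR2 (by norm_num))
      rw [memD]
      refine ⟨⟨?_, ?_⟩, ?_⟩
      · rw [qq_smul, qq_e, mul_one]; nlinarith
      · rw [qq_smul, qq_e, mul_one]; nlinarith
      · rintro j ⟨t, ht, hteq⟩
        apply hΓfree j
        have hs0 : s ≠ 0 := by linarith
        refine ⟨R / s * t, ?_, ?_⟩
        · have : 0 < R / s := div_pos (by linarith) (by linarith)
          exact mul_nonpos_of_nonneg_of_nonpos this.le ht
        · rw [hrep]
          calc R • ee ψ = (R/s) • (s • ee ψ) := by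
                rw [smul_smul]; congr 1; field_simp
            _ = (R/s) • (t • a j) := by rw [hteq]
            _ = (R/s*t) • a j := smul_smul _ _ _
    have heng := engine hw (fun s => s • ee ψ) (continuous_id.smul continuous_const)
      (Set.Icc (min R (3/2)) (max R (3/2))) isPreconnected_Icc hmem
      (t₁ := R) (t₂ := 3/2)
      ⟨min_le_left _ _, le_max_left _ _⟩ ⟨min_le_right _ _, le_max_right _ _⟩
    show w y = w ((3/2 : ℝ) • ee ψ)
    calc w y = w (R • ee ψ) := by rw [hrep]
      _ = w ((3/2 : ℝ) • ee ψ) := heng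
  -- constancy of F on A-free intervals
  have hFconst : ∀ θ₁ θ₂ : ℝ, θ₁ ≤ θ₂ → (∀ x ∈ A, x ∉ Set.Icc θ₁ θ₂) → F θ₁ = F θ₂ := by
    intro θ₁ θ₂ hle hfree
    exact engine hw (fun θ => (3/2:ℝ) • ee θ) (cont_ee.const_smul (3/2:ℝ))
      (Set.Icc θ₁ θ₂) isPreconnected_Icc
      (fun θ hθ => hsmulD (3/2) θ (by norm_num) (by norm_num)
        (fun j n hc => hfree θ ⟨j, n, hc⟩ hθ))
      ⟨le_refl _, hle⟩ ⟨hle, le_refl _⟩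
  -- periodicity of F
  have hFper : ∀ θ : ℝ, F (θ + 2 * π) = F θ := by
    intro θ
    show w ((3/2 : ℝ) • ee (θ + 2*π)) = w ((3/2 : ℝ) • ee θ)
    have h : ee (θ + 2*π) = ee θ := by
      have h2 : θ + 2*π = θ + 2*π*((1:ℤ):ℝ) := by push_cast; ring
      rw [h2, ee_per]
    rw [h]
  -- the jump relation
  have hbig : ∀ (j : Fin k₁) (n : ℤ) (δ : ℝ), 0 < δ → δ ≤ 1 →
      (∀ x ∈ A, x ∈ Set.Ioo (φf j + 2*π*n - δ) (φf j + 2*π*n + δ) → x = φf j + 2*π*n) →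
      F (φf j + 2*π*n - δ/2) + F (φf j + 2*π*n + δ/2) = 0 := by
    intro j n δ hδ0 hδ1 hfree
    set α : ℝ := φf j + 2*π*n with hαdef
    have hπ3 : (3:ℝ) < π + π := by nlinarith [Real.pi_gt_three]
    have hδπ : δ < π := by nlinarith [Real.pi_gt_three]
    have habs := abs_cc_pos (ha j)
    obtain ⟨hcj, hsj⟩ := hcos_phi (a j)
    have heα : ee α = ee (φf j) := by rw [hαdef]; exact ee_per _ n
    set t₀ : ℝ := -(3/2) / ‖cc (a j)‖ with ht₀
    have ht₀neg : t₀ < 0 := div_neg_of_neg_of_pos (by norm_num) habs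
    have hpt : t₀ • a j = (3/2 : ℝ) • ee α := by
      rw [heα]
      apply Prod.ext
      · show t₀ * (a j).1 = (3/2) * Real.cos (φf j)
        rw [ht₀, div_mul_eq_mul_div, div_eq_iff (ne_of_gt habs)]
        linear_combination (-(3/2 : ℝ)) * hcj
      · show t₀ * (a j).2 = (3/2) * Real.sin (φf j)
        rw [ht₀, div_mul_eq_mul_div, div_eq_iff (ne_of_gt habs)]
        linear_combination (-(3/2 : ℝ)) * hsj
    have hqpt : qq (t₀ • a j) = 9/4 := by rw [hpt, qq_smul, qq_e]; norm_num
    have hq1' : 1 < (t₀ • a j).1 ^ 2 + (t₀ • a j).2 ^ 2 := by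
      have : (t₀ • a j).1 ^ 2 + (t₀ • a j).2 ^ 2 = qq (t₀ • a j) := rfl
      rw [this, hqpt]; norm_num
    have hq4' : (t₀ • a j).1 ^ 2 + (t₀ • a j).2 ^ 2 < 4 := by
      have : (t₀ • a j).1 ^ 2 + (t₀ • a j).2 ^ 2 = qq (t₀ • a j) := rfl
      rw [this, hqpt]; norm_num
    obtain ⟨cp, cm, hcp, hcm, hsum⟩ := hjump j t₀ ht₀neg hq1' hq4'
    rw [hpt] at hcp hcm
    -- constancy of F on the two half-intervals
    have hFm : ∀ ψ₁ ψ₂ : ℝ, ψ₁ ∈ Set.Ioo (α - δ) α → ψ₂ ∈ Set.Ioo (α - δ) α → F ψ₁ = F ψ₂ := by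
      have key : ∀ ψ₁ ψ₂ : ℝ, ψ₁ ≤ ψ₂ → ψ₁ ∈ Set.Ioo (α - δ) α → ψ₂ ∈ Set.Ioo (α - δ) α →
          F ψ₁ = F ψ₂ := by
        intro ψ₁ ψ₂ hle h1 h2
        apply hFconst _ _ hle
        intro x hxA hxI
        have hxα : x = α := hfree x hxA ⟨by obtain ⟨u,v⟩ := h1; obtain ⟨u2,v2⟩ := hxI; linarith,
          by obtain ⟨u,v⟩ := h2; obtain ⟨u2,v2⟩ := hxI; linarith⟩
        obtain ⟨u,v⟩ := h2; obtain ⟨u2,v2⟩ := hxI; linarith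
      intro ψ₁ ψ₂ h1 h2
      rcases le_total ψ₁ ψ₂ with h | h
      · exact key ψ₁ ψ₂ h h1 h2
      · exact (key ψ₂ ψ₁ h h2 h1).symm
    have hFp : ∀ ψ₁ ψ₂ : ℝ, ψ₁ ∈ Set.Ioo α (α + δ) → ψ₂ ∈ Set.Ioo α (α + δ) → F ψ₁ = F ψ₂ := by
      have key : ∀ ψ₁ ψ₂ : ℝ, ψ₁ ≤ ψ₂ → ψ₁ ∈ Set.Ioo α (α + δ) → ψ₂ ∈ Set.Ioo α (α + δ) →
          F ψ₁ = F ψ₂ := by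
        intro ψ₁ ψ₂ hle h1 h2
        apply hFconst _ _ hle
        intro x hxA hxI
        have hxα : x = α := hfree x hxA ⟨by obtain ⟨u,v⟩ := h1; obtain ⟨u2,v2⟩ := hxI; linarith,
          by obtain ⟨u,v⟩ := h2; obtain ⟨u2,v2⟩ := hxI; linarith⟩
        obtain ⟨u,v⟩ := h1; obtain ⟨u2,v2⟩ := hxI; linarith
      intro ψ₁ ψ₂ h1 h2
      rcases le_total ψ₁ ψ₂ with h | h
      · exact key ψ₁ ψ₂ h h1 h2
      · exact (key ψ₂ ψ₁ h h2 h1).symm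
    -- the angle function near the point
    set p : ℝ × ℝ := (3/2 : ℝ) • ee α with hp
    set Ψ : ℝ × ℝ → ℝ := fun y => α + (cc y * Complex.exp (-(α:ℂ) * Complex.I)).arg with hΨ
    have hu0 : cc p * Complex.exp (-(α:ℂ) * Complex.I) = ((3/2 : ℝ) : ℂ) := by
      rw [hp, cc_smul, cc_e, mul_assoc, ← Complex.exp_add]
      rw [show (α:ℂ) * Complex.I + -(α:ℂ) * Complex.I = 0 from by ring]
      rw [Complex.exp_zero, mul_one]
    have hΨtend : Tendsto Ψ (𝓝 p) (𝓝 α) := by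
      have hcont : ContinuousAt (fun y : ℝ × ℝ => (cc y * Complex.exp (-(α:ℂ) * Complex.I)).arg) p := by
        have hf : ContinuousAt (fun y : ℝ × ℝ => cc y * Complex.exp (-(α:ℂ) * Complex.I)) p :=
          (cont_cc.continuousAt).mul continuousAt_const
        have hg : ContinuousAt Complex.arg (cc p * Complex.exp (-(α:ℂ) * Complex.I)) := by
          rw [hu0]
          apply Complex.continuousAt_arg
          rw [Complex.mem_slitPlane_iff]
          left
          rw [Complex.ofReal_re]
          norm_num
        exact ContinuousAt.comp (g := Complex.arg)
          (f := fun y : ℝ × ℝ => cc y * Complex.exp (-(α:ℂ) * Complex.I)) hg hf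
      have hval : (cc p * Complex.exp (-(α:ℂ) * Complex.I)).arg = 0 := by
        rw [hu0]; exact Complex.arg_ofReal_of_nonneg (by norm_num)
      have : ContinuousAt Ψ p := by
        rw [hΨ]; exact continuousAt_const.add hcont
      have hΨp : Ψ p = α := by
        show α + (cc p * Complex.exp (-(α:ℂ) * Complex.I)).arg = α
        rw [hval, add_zero]
      rw [← hΨp]
      exact this.tendsto
    have hU : ∀ᶠ y in 𝓝 p, |Ψ y - α| < δ := by
      have hball : ∀ᶠ ψ in 𝓝 α, |ψ - α| < δ := by
        have : Metric.ball α δ ∈ 𝓝 α := Metric.ball_mem_nhds α hδ0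
        filter_upwards [this] with ψ hψ
        rwa [Metric.mem_ball, Real.dist_eq] at hψ
      exact hΨtend.eventually hball
    -- representation of nonzero points via Ψ
    have hrepΨ : ∀ y : ℝ × ℝ, y ≠ 0 → y = Real.sqrt (qq y) • ee (Ψ y) := by
      intro y hy0
      apply rep_of_eq
      have hcc0 : cc y ≠ 0 := fun hc => hy0 (cc_eq_zero.mp hc)
      set u : ℂ := cc y * Complex.exp (-(α:ℂ) * Complex.I) with hu
      have habsu : ‖u‖ = ‖cc y‖ := by
        rw [hu, norm_mul]
        rw [show -(α:ℂ) * Complex.I = ((-α : ℝ) : ℂ) * Complex.I from by push_cast; ring]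
        rw [Complex.norm_exp_ofReal_mul_I, mul_one]
      have h3 := Complex.norm_mul_exp_arg_mul_I u
      have hΨy : ((Ψ y : ℝ) : ℂ) = (α : ℂ) + (u.arg : ℂ) := by
        rw [hΨ]; push_cast; ring
      calc (‖cc y‖ : ℂ) * Complex.exp ((Ψ y : ℂ) * Complex.I)
          = Complex.exp ((α:ℂ) * Complex.I) * ((‖u‖ : ℂ) * Complex.exp ((u.arg : ℂ) * Complex.I)) := by
            rw [habsu, hΨy, add_mul, Complex.exp_add]; ring
        _ = Complex.exp ((α:ℂ) * Complex.I) * u := by rw [h3]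
        _ = cc y := by
            rw [hu, mul_comm (cc y), ← mul_assoc, ← Complex.exp_add,
              show (α:ℂ) * Complex.I + -(α:ℂ) * Complex.I = 0 from by ring,
              Complex.exp_zero, one_mul]
    -- identification of the two traces
    have htrace : ∀ (y : ℝ × ℝ), y ∈ D → |Ψ y - α| < δ →
        (0 < (a j).1 * y.2 - (a j).2 * y.1 → w y = F (α - δ/2)) ∧
        ((a j).1 * y.2 - (a j).2 * y.1 < 0 → w y = F (α + δ/2)) := by
      intro y hyD hyU
      have hyq := ((memD y).mp hyD).1.1
      have hy0 : y ≠ 0 := by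
        intro hc
        rw [hc] at hyq
        simp [qq] at hyq
        linarith
      have hR0 : 0 < Real.sqrt (qq y) := Real.sqrt_pos.mpr (by linarith)
      have hyr := hrepΨ y hy0
      have hcr : (a j).1 * y.2 - (a j).2 * y.1 =
          -(‖cc (a j)‖) * Real.sqrt (qq y) * Real.sin (Ψ y - α) := by
        have hc2 := cross_formula (a j) (Real.sqrt (qq y)) (Ψ y)
        have hsh : Real.sin (Ψ y - (-(cc (a j))).arg) = Real.sin (Ψ y - α) := by
          rw [show Ψ y - (-(cc (a j))).arg = (Ψ y - α) + (n:ℝ) * (2*π) from by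
            rw [hαdef]; push_cast; ring]
          exact Real.sin_add_int_mul_two_pi _ n
        rw [hsh] at hc2
        rw [← hc2]
        conv_lhs => rw [hyr]
      have hwy : w y = F (Ψ y) := hkey y hyD (Ψ y) hyr
      constructor
      · intro hpos
        rw [hcr] at hpos
        have hsin : Real.sin (Ψ y - α) < 0 := by
          by_contra hc
          push_neg at hc
          nlinarith [mul_nonneg (mul_nonneg habs.le hR0.le) hc]
        have hlt : Ψ y < α := by
          by_contra hc
          push_neg at hc
          have h0 : 0 ≤ Ψ y - α := by linarith
          have h1 : Ψ y - α ≤ π := by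
            have := abs_lt.mp hyU; linarith
          nlinarith [Real.sin_nonneg_of_nonneg_of_le_pi h0 h1]
        have habslt := abs_lt.mp hyU
        rw [hwy]
        exact hFm (Ψ y) (α - δ/2) ⟨by linarith, hlt⟩ ⟨by linarith, by linarith⟩
      · intro hneg
        rw [hcr] at hneg
        have hsin : 0 < Real.sin (Ψ y - α) := by
          by_contra hc
          push_neg at hc
          nlinarith [mul_nonpos_of_nonneg_of_nonpos (mul_nonneg habs.le hR0.le) hc]
        have hlt : α < Ψ y := by
          by_contra hc
          push_neg at hc
          have h0 : Ψ y - α ≤ 0 := by linarith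
          have h1 : -π ≤ Ψ y - α := by
            have := abs_lt.mp hyU; linarith
          have := Real.sin_nonneg_of_nonneg_of_le_pi (x := -(Ψ y - α)) (by linarith) (by linarith)
          rw [Real.sin_neg] at this
          linarith
        have habslt := abs_lt.mp hyU
        rw [hwy]
        exact hFp (Ψ y) (α + δ/2) ⟨hlt, by linarith⟩ ⟨by linarith, by linarith⟩
    -- the approaching sequences: nontriviality of the filters
    have hseq : ∀ ε : ℝ, Tendsto (fun s : ℝ => (3/2:ℝ) • ee (α + ε * s)) (𝓝[>] (0:ℝ))
        (𝓝 p) := by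
      intro ε
      have hcont : Continuous (fun s : ℝ => (3/2:ℝ) • ee (α + ε * s)) := by
        refine Continuous.const_smul (g := fun s : ℝ => ee (α + ε * s)) ?_ (3/2:ℝ)
        exact cont_ee.comp (continuous_const.add (continuous_const.mul continuous_id))
      have := hcont.tendsto 0
      simp only [mul_zero, add_zero] at this
      rw [← hp] at this
      exact this.mono_left nhdsWithin_le_nhds
    have hmemseq : ∀ σ : ℝ, σ = 1 ∨ σ = -1 → ∀ s : ℝ, s ∈ Set.Ioo (0:ℝ) δ →
        ((3/2:ℝ) • ee (α + σ * s)) ∈ D ∧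
        ((a j).1 * ((3/2:ℝ) • ee (α + σ * s)).2 - (a j).2 * ((3/2:ℝ) • ee (α + σ * s)).1)
          = (3/2) * ‖cc (a j)‖ * (-(Real.sin (σ * s))) := by
      intro σ hσ s hs
      obtain ⟨hs0, hsδ⟩ := hs
      have hσs : σ * s ≠ 0 := by
        rcases hσ with rfl | rfl
        · rw [one_mul]; exact ne_of_gt hs0
        · rw [neg_one_mul]; exact neg_ne_zero.mpr (ne_of_gt hs0)
      have hσsb : |σ * s| < δ := by
        rcases hσ with rfl | rfl
        · rw [one_mul, abs_of_pos hs0]; linarith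
        · rw [neg_one_mul, abs_neg, abs_of_pos hs0]; linarith
      constructor
      · apply hsmulD (3/2) _ (by norm_num) (by norm_num)
        intro i m hc
        have hcA : α + σ * s ∈ A := ⟨i, m, hc⟩
        have habsl := abs_lt.mp hσsb
        have := hfree _ hcA ⟨by linarith, by linarith⟩
        apply hσs
        linarith
      · have hc2 := cross_formula (a j) (3/2) (α + σ * s)
        have hsh : Real.sin ((α + σ * s) - (-(cc (a j))).arg) = Real.sin (σ * s) := by
          rw [show (α + σ * s) - (-(cc (a j))).arg = (σ * s) + (n:ℝ) * (2*π) from by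
            rw [hαdef]; push_cast; ring]
          exact Real.sin_add_int_mul_two_pi _ n
        rw [hsh] at hc2
        rw [hc2]
        ring
    have hne1 : (𝓝[D ∩ {x : ℝ × ℝ | 0 < (a j).1 * x.2 - (a j).2 * x.1}] p).NeBot := by
      rw [← mem_closure_iff_nhdsWithin_neBot]
      apply mem_closure_of_tendsto (hseq (-1))
      filter_upwards [Ioo_mem_nhdsGT_of_mem (⟨le_refl (0:ℝ), hδ0⟩ : (0:ℝ) ∈ Set.Ico 0 δ)] with s hs
      obtain ⟨hD', hcr'⟩ := hmemseq (-1) (Or.inr rfl) s hs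
      refine ⟨hD', ?_⟩
      rw [Set.mem_setOf_eq, hcr']
      have hmm : Real.sin (-1 * s) = -Real.sin s := by rw [neg_one_mul, Real.sin_neg]
      rw [hmm]
      have hsin : 0 < Real.sin s := Real.sin_pos_of_pos_of_lt_pi hs.1 (by obtain ⟨u,v⟩ := hs; linarith)
      nlinarith
    have hne2 : (𝓝[D ∩ {x : ℝ × ℝ | (a j).1 * x.2 - (a j).2 * x.1 < 0}] p).NeBot := by
      rw [← mem_closure_iff_nhdsWithin_neBot]
      apply mem_closure_of_tendsto (hseq 1)
      filter_upwards [Ioo_mem_nhdsGT_of_mem (⟨le_refl (0:ℝ), hδ0⟩ : (0:ℝ) ∈ Set.Ico 0 δ)] with s hs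
      obtain ⟨hD', hcr'⟩ := hmemseq 1 (Or.inl rfl) s hs
      refine ⟨hD', ?_⟩
      rw [Set.mem_setOf_eq, hcr']
      have hmm : Real.sin (1 * s) = Real.sin s := by rw [one_mul]
      rw [hmm]
      have hsin : 0 < Real.sin s := Real.sin_pos_of_pos_of_lt_pi hs.1 (by obtain ⟨u,v⟩ := hs; linarith)
      nlinarith
    -- identify limits
    have hev1 : ∀ᶠ y in 𝓝[D ∩ {x : ℝ × ℝ | 0 < (a j).1 * x.2 - (a j).2 * x.1}] p,
        w y = F (α - δ/2) := by
      rw [eventually_nhdsWithin_iff]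
      filter_upwards [hU] with y hyU hymem
      exact (htrace y hymem.1 hyU).1 hymem.2
    have hev2 : ∀ᶠ y in 𝓝[D ∩ {x : ℝ × ℝ | (a j).1 * x.2 - (a j).2 * x.1 < 0}] p,
        w y = F (α + δ/2) := by
      rw [eventually_nhdsWithin_iff]
      filter_upwards [hU] with y hyU hymem
      exact (htrace y hymem.1 hyU).2 hymem.2
    have hcp' : cp = F (α - δ/2) := by
      haveI := hne1
      exact tendsto_nhds_unique hcp (Tendsto.congr' (by filter_upwards [hev1] with y h; exact h.symm) tendsto_const_nhds)
    have hcm' : cm = F (α + δ/2) := by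
      haveI := hne2
      exact tendsto_nhds_unique hcm (Tendsto.congr' (by filter_upwards [hev2] with y h; exact h.symm) tendsto_const_nhds)
    rw [hcp', hcm'] at hsum
    exact hsum
  -- finiteness of A on intervals
  have hAfin : ∀ θ₁ θ₂ : ℝ, (A ∩ Set.Ioo θ₁ θ₂).Finite := by
    intro θ₁ θ₂
    apply Set.Finite.subset
      (Set.finite_iUnion (fun j : Fin k₁ =>
        coset_finite (φf j) θ₁ θ₂))
    rintro x ⟨⟨j, n, rfl⟩, hI⟩
    exact Set.mem_iUnion.mpr ⟨j, ⟨n, rfl⟩, hI⟩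
  -- main induction
  have hmain : ∀ nn : ℕ, ∀ θ₁ θ₂ : ℝ, θ₁ < θ₂ → θ₁ ∉ A → θ₂ ∉ A →
      (A ∩ Set.Ioo θ₁ θ₂).ncard = nn → F θ₂ = (-1)^nn * F θ₁ := by
    intro nn
    induction nn with
    | zero =>
      intro θ₁ θ₂ hlt hθ₁ hθ₂ hcard
      rw [pow_zero, one_mul]
      refine (hFconst θ₁ θ₂ hlt.le ?_).symm
      intro x hxA hxI
      rcases eq_or_lt_of_le hxI.1 with rfl | h1
      · exact hθ₁ hxA
      rcases eq_or_lt_of_le hxI.2 with rfl | h2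
      · exact hθ₂ hxA
      have : x ∈ A ∩ Set.Ioo θ₁ θ₂ := ⟨hxA, h1, h2⟩
      have hne : (A ∩ Set.Ioo θ₁ θ₂).Nonempty := ⟨x, this⟩
      rw [← Set.ncard_pos (hAfin θ₁ θ₂)] at hne
      omega
    | succ n ih =>
      intro θ₁ θ₂ hlt hθ₁ hθ₂ hcard
      set S := A ∩ Set.Ioo θ₁ θ₂ with hS
      have hfin : S.Finite := hAfin θ₁ θ₂
      have hSne : S.Nonempty := by
        rw [← Set.ncard_pos hfin]; omega
      have hTne : hfin.toFinset.Nonempty := by rwa [Set.Finite.toFinset_nonempty]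
      set α := hfin.toFinset.min' hTne with hα
      have hαS : α ∈ S := hfin.mem_toFinset.mp (Finset.min'_mem _ _)
      have hαmin : ∀ x ∈ S, α ≤ x := fun x hx =>
        Finset.min'_le _ x (hfin.mem_toFinset.mpr hx)
      obtain ⟨hαA, hαI⟩ := hαS
      obtain ⟨j, n₀, hαeq⟩ := hαA
      have finS' : ((A ∩ Set.Ioo (α-1) (α+1)) \ {α}).Finite :=
        (hAfin (α-1) (α+1)).diff
      obtain ⟨δ, hδ0, hδ1, hδmin⟩ := finmin finS' α
        (fun x hx => fun hc => hx.2 (by simp [hc]))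
      have hfree : ∀ x ∈ A, x ∈ Set.Ioo (α - δ) (α + δ) → x = α := by
        intro x hxA hxI
        by_contra hne
        have hx' : x ∈ (A ∩ Set.Ioo (α-1) (α+1)) \ {α} :=
          ⟨⟨hxA, ⟨by cases hxI; linarith, by cases hxI; linarith⟩⟩, by simp [hne]⟩
        have h1 := hδmin x hx'
        have h2 : |x - α| < δ := abs_lt.mpr ⟨by cases hxI; linarith, by cases hxI; linarith⟩
        linarith
      set δ' := min δ (min (α - θ₁) (θ₂ - α)) / 2 with hδ'
      have hδ'0 : 0 < δ' := by
        apply div_pos _ (by norm_num)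
        apply lt_min hδ0 (lt_min (by cases hαI; linarith) (by cases hαI; linarith))
      have hδ'δ : δ' < δ := by
        have hm : min δ (min (α - θ₁) (θ₂ - α)) ≤ δ := min_le_left _ _
        rw [hδ']; linarith
      have hδ'θ₁ : δ' < α - θ₁ := by
        have hm : min δ (min (α - θ₁) (θ₂ - α)) ≤ α - θ₁ :=
          le_trans (min_le_right _ _) (min_le_left _ _)
        rw [hδ']; obtain ⟨h1', h2'⟩ := hαI; linarith
      have hδ'θ₂ : δ' < θ₂ - α := by
        have hm : min δ (min (α - θ₁) (θ₂ - α)) ≤ θ₂ - α :=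
          le_trans (min_le_right _ _) (min_le_right _ _)
        rw [hδ']; obtain ⟨h1', h2'⟩ := hαI; linarith
      have hδ'1 : δ' ≤ 1 := by linarith
      have hfree' : ∀ x ∈ A, x ∈ Set.Ioo (φf j + 2*π*n₀ - δ') (φf j + 2*π*n₀ + δ') →
          x = φf j + 2*π*n₀ := by
        intro x hxA hxI
        rw [← hαeq] at hxI ⊢
        exact hfree x hxA ⟨by obtain ⟨u,v⟩ := hxI; linarith, by obtain ⟨u,v⟩ := hxI; linarith⟩
      have hsum := hbig j n₀ δ' hδ'0 hδ'1 hfree'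
      rw [← hαeq] at hsum
      set θm := α - δ'/2 with hθm
      set θp := α + δ'/2 with hθp
      have hθmA : θm ∉ A := by
        intro hc
        have := hfree θm hc ⟨by rw [hθm]; linarith, by rw [hθm]; linarith⟩
        rw [hθm] at this; linarith
      have hθpA : θp ∉ A := by
        intro hc
        have := hfree θp hc ⟨by rw [hθp]; linarith, by rw [hθp]; linarith⟩
        rw [hθp] at this; linarith
      have hFθ₁ : F θ₁ = F θm := by
        apply hFconst θ₁ θm (by rw [hθm]; obtain ⟨h1', h2'⟩ := hαI; linarith)
        intro x hxA hxI
        rcases eq_or_lt_of_le hxI.1 with rfl | h1'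
        · exact hθ₁ hxA
        · have hxS : x ∈ S := ⟨hxA, h1', by
            obtain ⟨u, v⟩ := hαI
            have := hxI.2; rw [hθm] at this; linarith⟩
          have := hαmin x hxS
          have := hxI.2; rw [hθm] at this; linarith
      have hset : A ∩ Set.Ioo θp θ₂ = S \ {α} := by
        ext x
        constructor
        · rintro ⟨hxA, hxI⟩
          obtain ⟨u, v⟩ := hxI
          rw [hθp] at u
          refine ⟨⟨hxA, ⟨by obtain ⟨u', v'⟩ := hαI; linarith, v⟩⟩, ?_⟩
          simp only [Set.mem_singleton_iff]
          intro hc; rw [hc] at u; linarith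
        · rintro ⟨⟨hxA, hxI⟩, hxne⟩
          simp only [Set.mem_singleton_iff] at hxne
          have hαx : α < x := lt_of_le_of_ne (hαmin x ⟨hxA, hxI⟩) (Ne.symm hxne)
          refine ⟨hxA, ⟨?_, hxI.2⟩⟩
          by_contra hc
          push_neg at hc
          have := hfree x hxA ⟨by linarith, by rw [hθp] at hc; linarith⟩
          linarith
      have hcard' : (A ∩ Set.Ioo θp θ₂).ncard = n := by
        have hαmem : α ∈ S := ⟨⟨j, n₀, hαeq⟩, hαI⟩
        rw [hset, Set.ncard_diff_singleton_of_mem hαmem]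
        omega
      have hIH := ih θp θ₂ (by rw [hθp]; obtain ⟨u,v⟩ := hαI; linarith) hθpA hθ₂ hcard'
      have hFθp : F θp = -(F θ₁) := by rw [hFθ₁]; linarith
      rw [hIH, hFθp, pow_succ]
      ring
  -- counting
  have hcount : ∀ θ : ℝ, θ ∉ A → (A ∩ Set.Ioo θ (θ + 2*π)).ncard = k₁ := by
    intro θ hθ
    have huniq : ∀ j : Fin k₁, ∃! n : ℤ, φf j + 2*π*n ∈ Set.Ioo θ (θ + 2*π) :=
      fun j => coset_unique (φf j) θ (fun n hc => hθ ⟨j, n, hc⟩)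
    choose g hg hguniq using huniq
    have hset : A ∩ Set.Ioo θ (θ + 2*π) = Set.range (fun j => φf j + 2*π*(g j)) := by
      ext x
      constructor
      · rintro ⟨⟨j, n, rfl⟩, hxI⟩
        exact ⟨j, by rw [hguniq j n hxI]⟩
      · rintro ⟨j, rfl⟩
        exact ⟨⟨j, g j, rfl⟩, hg j⟩
    have hinj : Function.Injective (fun j : Fin k₁ => φf j + 2*π*(g j)) := by
      intro i j hij
      by_contra hne
      simp only at hij
      have hphi : φf i = φf j + ((g j : ℝ) - (g i : ℝ)) * (2*π) := by push_cast at hij ⊢; linarith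
      have hmint : ((g j - g i : ℤ) : ℝ) = (g j : ℝ) - (g i : ℝ) := by push_cast; ring
      have hcoseq : Real.cos (φf i) = Real.cos (φf j) := by
        rw [hphi, ← hmint, Real.cos_add_int_mul_two_pi]
      have hsineq : Real.sin (φf i) = Real.sin (φf j) := by
        rw [hphi, ← hmint, Real.sin_add_int_mul_two_pi]
      obtain ⟨hci, hsi⟩ := hcos_phi (a i)
      obtain ⟨hcj, hsj⟩ := hcos_phi (a j)
      have habsi := abs_cc_pos (ha i)
      have habsj := abs_cc_pos (ha j)
      set s : ℝ := ‖cc (a i)‖ / ‖cc (a j)‖ with hs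
      have hspos : 0 < s := div_pos habsi habsj
      apply hdir i j hne s hspos
      apply Prod.ext
      · show (a i).1 = s * (a j).1
        rw [hs, div_mul_eq_mul_div, eq_div_iff (ne_of_gt habsj)]
        rw [hcoseq] at hci
        linear_combination (‖cc (a j)‖) * hci - (‖cc (a i)‖) * hcj
      · show (a i).2 = s * (a j).2
        rw [hs, div_mul_eq_mul_div, eq_div_iff (ne_of_gt habsj)]
        rw [hsineq] at hsi
        linear_combination (‖cc (a j)‖) * hsi - (‖cc (a i)‖) * hsj
    rw [hset, ← Set.image_univ, Set.ncard_image_of_injective _ hinj, Set.ncard_univ]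
    simp
  -- conclusion
  have hx0ne : x₀ ≠ 0 := by
    intro h
    have := ((memD x₀).mp hx₀).1.1
    rw [h] at this
    simp [qq] at this
    linarith
  set ψ := (cc x₀).arg with hψ
  have hrep : x₀ = Real.sqrt (qq x₀) • ee ψ := by
    obtain ⟨h1, h2⟩ := hcos_arg x₀
    rw [abs_cc] at h1 h2
    apply Prod.ext
    · show x₀.1 = Real.sqrt (qq x₀) * Real.cos ψ
      rw [← h1]
    · show x₀.2 = Real.sqrt (qq x₀) * Real.sin ψ
      rw [← h2]
  have hq1 : 1 < qq x₀ := ((memD x₀).mp hx₀).1.1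
  have hsq : 0 < Real.sqrt (qq x₀) := Real.sqrt_pos.mpr (by linarith)
  have hψA : ψ ∉ A := by
    rintro ⟨j, n, hc⟩
    have := (memGamma (ha j) (Real.sqrt (qq x₀)) ψ hsq).mpr ⟨n, hc⟩
    obtain ⟨t, ht, hteq⟩ := this
    exact ((memD x₀).mp hx₀).2 j ⟨t, ht, by rw [hrep, hteq]⟩
  have hψ2A : ψ + 2*π ∉ A := by
    rintro ⟨j, n, hc⟩
    exact hψA ⟨j, n - 1, by push_cast; linarith⟩
  have hFψ := hmain k₁ ψ (ψ + 2*π) (by linarith) hψA hψ2A (hcount ψ hψA)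
  rw [hFper, Odd.neg_one_pow hodd] at hFψ
  have hF0 : F ψ = 0 := by linarith
  rw [hkey x₀ hx₀ ψ hrep, hF0]
end

section
/- Let X be a real Hilbert space, H ⊂ X a closed subspace, L : X → ℝ a continuous linear functional, g ∈ X, and J(w) = (1/2)‖w‖² + L(w). Let V minimize J over g + H and set E = J(V). Then E = -(1/2) sup_{w ∈ H \ {0}} (⟨w, g⟩ + L(w))² / ‖w‖² + (1/2)‖g‖² + L(g). -/
open RealInnerProductSpace

private lemma quad_coeff_zero (a c : ℝ) (hc : 0 ≤ c)
    (h : ∀ t : ℝ, 0 ≤ a * t + c * t ^ 2) : a = 0 := by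
  by_contra ha
  have hc1 : (0:ℝ) < 2 * c + 1 := by linarith
  have h1 := h (-(a / (2 * c + 1)))
  have heq : a * (-(a / (2 * c + 1))) + c * (-(a / (2 * c + 1))) ^ 2
      = (a ^ 2 / (2 * c + 1) ^ 2) * (c - (2 * c + 1)) := by
    field_simp
    ring
  rw [heq] at h1
  have hpos : 0 < a ^ 2 / (2 * c + 1) ^ 2 := by positivity
  nlinarith

/-- Abstract characterization of the minimal energy: if `V` minimizes
`J(w) = (1/2)‖w‖² + L(w)` over the affine subspace `g + H` and `E = J(V)`, then
`E = -(1/2) sup_{w ∈ H∖{0}} (⟨w,g⟩ + L(w))²/‖w‖² + (1/2)‖g‖² + L(g)`. -/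
theorem energy_sup_characterization
    {X : Type*} [NormedAddCommGroup X] [InnerProductSpace ℝ X] [CompleteSpace X]
    (H : Submodule ℝ X) (hH : IsClosed (H : Set X))
    (L : X →L[ℝ] ℝ) (g : X) (J : X → ℝ)
    (hJ : ∀ w, J w = (1 / 2) * ‖w‖ ^ 2 + L w)
    (V : X) (hVmem : V - g ∈ H) (hVmin : ∀ u : X, u - g ∈ H → J V ≤ J u)
    (E : ℝ) (hE : E = J V) :
    E = -(1 / 2) * sSup {y : ℝ | ∃ w ∈ H, w ≠ 0 ∧ y = (⟪w, g⟫ + L w) ^ 2 / ‖w‖ ^ 2}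
        + (1 / 2) * ‖g‖ ^ 2 + L g := by
  set h₀ : X := V - g with hh₀
  set S : Set ℝ := {y : ℝ | ∃ w ∈ H, w ≠ 0 ∧ y = (⟪w, g⟫ + L w) ^ 2 / ‖w‖ ^ 2} with hSdef
  -- Euler–Lagrange condition
  have EL : ∀ w ∈ H, ⟪V, w⟫ + L w = 0 := by
    intro w hw
    apply quad_coeff_zero _ (‖w‖ ^ 2 / 2) (by positivity)
    intro t
    have hrw : V + t • w - g = (V - g) + t • w := by abel
    have hmem : (V + t • w) - g ∈ H := by
      rw [hrw]; exact H.add_mem hVmem (H.smul_mem t hw)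
    have h := hVmin _ hmem
    rw [hJ, hJ] at h
    have hnorm : ‖V + t • w‖ ^ 2 = ‖V‖ ^ 2 + 2 * (t * ⟪V, w⟫) + t ^ 2 * ‖w‖ ^ 2 := by
      rw [norm_add_sq_real, real_inner_smul_right, norm_smul]
      rw [mul_pow]
      simp [Real.norm_eq_abs, sq_abs]
    have hL : L (V + t • w) = L V + t * L w := by
      rw [map_add, map_smul]; simp [smul_eq_mul]
    rw [hnorm, hL] at h
    nlinarith [h]
  have hh₀H : h₀ ∈ H := hVmem
  -- identity for the numerator
  have hid : ∀ w ∈ H, ⟪w, g⟫ + L w = -⟪w, h₀⟫ := by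
    intro w hw
    have h2 : ⟪w, h₀⟫ = ⟪V, w⟫ - ⟪w, g⟫ := by
      rw [hh₀, inner_sub_right, real_inner_comm]
    linarith [EL w hw, h2]
  -- upper bound for elements of S
  have hub : ∀ y ∈ S, y ≤ ‖h₀‖ ^ 2 := by
    rintro y ⟨w, hw, hw0, rfl⟩
    rw [hid w hw]
    have hwpos : 0 < ‖w‖ ^ 2 := by
      have := norm_pos_iff.mpr hw0; positivity
    rw [div_le_iff₀ hwpos]
    nlinarith [abs_real_inner_le_norm w h₀, sq_abs (⟪w, h₀⟫), abs_nonneg (⟪w, h₀⟫),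
      norm_nonneg w, norm_nonneg h₀]
  have hbdd : BddAbove S := ⟨‖h₀‖ ^ 2, hub⟩
  -- value of the supremum
  have hS : sSup S = ‖h₀‖ ^ 2 := by
    by_cases hzero : h₀ = 0
    · have hS0 : ∀ y ∈ S, y = 0 := by
        rintro y ⟨w, hw, hw0, rfl⟩
        rw [hid w hw, hzero, inner_zero_right]
        simp
      rw [hzero, norm_zero]
      rcases Set.eq_empty_or_nonempty S with he | hne
      · rw [he, Real.sSup_empty]; norm_num
      · have : S = {0} := Set.eq_singleton_iff_nonempty_unique_mem.mpr ⟨hne, hS0⟩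
        rw [this, csSup_singleton]; norm_num
    · have hn0 : ‖h₀‖ ≠ 0 := norm_ne_zero_iff.mpr hzero
      have hmemS : ‖h₀‖ ^ 2 ∈ S := by
        refine ⟨h₀, hh₀H, hzero, ?_⟩
        rw [hid h₀ hh₀H, real_inner_self_eq_norm_sq]
        field_simp
      exact le_antisymm (csSup_le ⟨_, hmemS⟩ hub) (le_csSup hbdd hmemS)
  -- final algebra
  rw [hE, hJ, hS]
  have h1 : ‖h₀‖ ^ 2 = ‖V‖ ^ 2 - 2 * ⟪V, g⟫ + ‖g‖ ^ 2 := by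
    rw [hh₀, norm_sub_sq_real]
  have h2 : L h₀ = L V - L g := by rw [hh₀, map_sub]
  have h3 : ⟪V, h₀⟫ = ‖V‖ ^ 2 - ⟪V, g⟫ := by
    rw [hh₀, inner_sub_right, real_inner_self_eq_norm_sq]
  have h4 := EL h₀ hh₀H
  linarith
end
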